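/- arXiv:1106.3582 — 2 statements merged into one kernel-verified Lean document; each statement's English description precedes it below -/
import Mathlib

section
/- Let n be a natural number, C : Fin n → Fin n → ℝ a cost matrix with interest matrix ψ (ψ i j = true iff C i j < 0), and k : Fin n → ℕ a degree sequence. Then a graph x on n nodes is pairwise stable with respect to C and has degree sequence k (i.e., for every node i, the number of nodes j ≠ i with x i j = true equals k i) if and only if for all pairs i ≠ j the constraints (ψ i j) + (ψ j i) − 1 ≤ x i j, x i j ≤ ψ i j, x i j ≤ ψ j i, and x i j = x j i all hold (reading true as 1, false as 0), and for every i the sum over j ≠ i of x i j equals k i. -/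
/-- A graph on `n` nodes: a symmetric, irreflexive Boolean matrix. -/
def IsGraph {n : ℕ} (x : Fin n → Fin n → Bool) : Prop :=
  (∀ i j, x i j = x j i) ∧ ∀ i, x i i = false

/-- Pairwise stability of the graph `x` with respect to the cost matrix `C`. -/
def PairwiseStable {n : ℕ} (C : Fin n → Fin n → ℝ) (x : Fin n → Fin n → Bool) : Prop :=
  (∀ i j, i ≠ j → x i j = true → C i j < 0 ∧ C j i < 0) ∧
  (∀ i j, i ≠ j → x i j = false → 0 ≤ C i j ∨ 0 ≤ C j i)

/-- The degree of node `i` in the graph `x`: the number of nodes `j ≠ i` linked to `i`. -/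
def deg {n : ℕ} (x : Fin n → Fin n → Bool) (i : Fin n) : ℕ :=
  (Finset.univ.filter fun j => j ≠ i ∧ x i j = true).card

lemma deg_eq_sum {n : ℕ} (x : Fin n → Fin n → Bool) (i : Fin n) :
    deg x i = ∑ j ∈ Finset.univ.filter (fun j => j ≠ i), (x i j).toNat := by
  unfold deg
  rw [Finset.card_eq_sum_ones, Finset.sum_filter, Finset.sum_filter]
  apply Finset.sum_congr rfl
  intro j _
  by_cases h : j = i <;> simp [h] <;> cases x i j <;> simp

theorem stability_degree_constraints (n : ℕ) (C : Fin n → Fin n → ℝ)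
    (ψ : Fin n → Fin n → Bool) (hψ : ∀ i j, ψ i j = true ↔ C i j < 0)
    (k : Fin n → ℕ) (x : Fin n → Fin n → Bool) (hx : IsGraph x) :
    (PairwiseStable C x ∧ ∀ i, deg x i = k i) ↔
      ((∀ i j : Fin n, i ≠ j →
          ((ψ i j).toNat : ℤ) + ((ψ j i).toNat : ℤ) - 1 ≤ ((x i j).toNat : ℤ) ∧
          ((x i j).toNat : ℤ) ≤ ((ψ i j).toNat : ℤ) ∧
          ((x i j).toNat : ℤ) ≤ ((ψ j i).toNat : ℤ) ∧
          x i j = x j i) ∧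
        ∀ i : Fin n, ∑ j ∈ Finset.univ.filter (fun j => j ≠ i), (x i j).toNat = k i) := by
  have hdeg : ∀ i, deg x i = ∑ j ∈ Finset.univ.filter (fun j => j ≠ i), (x i j).toNat :=
    deg_eq_sum x
  constructor
  · rintro ⟨⟨hs1, hs2⟩, hk⟩
    refine ⟨fun i j hij => ?_, fun i => by rw [← hdeg, hk]⟩
    refine ⟨?_, ?_, ?_, hx.1 i j⟩
    · rcases hxij : x i j with _ | _
      · rcases hs2 i j hij hxij with h | h
        · have : ψ i j = false := by
            cases hh : ψ i j
            · rfl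
            · exact absurd ((hψ i j).mp hh) (not_lt.mpr h)
          simp [this]
          cases ψ j i <;> simp
        · have : ψ j i = false := by
            cases hh : ψ j i
            · rfl
            · exact absurd ((hψ j i).mp hh) (not_lt.mpr h)
          simp [this]
          cases ψ i j <;> simp
      · simp
        cases ψ i j <;> cases ψ j i <;> simp
    · rcases hxij : x i j with _ | _
      · simp
      · have := (hs1 i j hij hxij).1
        have : ψ i j = true := (hψ i j).mpr this
        simp [this]
    · rcases hxij : x i j with _ | _
      · simp
      · have := (hs1 i j hij hxij).2
        have : ψ j i = true := (hψ j i).mpr this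
        simp [this]
  · rintro ⟨h1, h2⟩
    refine ⟨⟨fun i j hij hxij => ?_, fun i j hij hxij => ?_⟩,
      fun i => by rw [hdeg, h2]⟩
    · obtain ⟨_, hb, hc, _⟩ := h1 i j hij
      rw [hxij] at hb hc
      constructor
      · apply (hψ i j).mp
        cases hh : ψ i j
        · rw [hh] at hb; simp at hb
        · rfl
      · apply (hψ j i).mp
        cases hh : ψ j i
        · rw [hh] at hc; simp at hc
        · rfl
    · obtain ⟨ha, _, _, _⟩ := h1 i j hij
      rw [hxij] at ha
      by_contra hcon
      push_neg at hcon
      obtain ⟨hc1, hc2⟩ := hcon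
      have hp1 : ψ i j = true := (hψ i j).mpr hc1
      have hp2 : ψ j i = true := (hψ j i).mpr hc2
      rw [hp1, hp2] at ha
      simp at ha
end

section
/- Let n be a natural number and k : Fin n → ℕ a target degree sequence. Suppose the pair (x*, ψ*) of Boolean matrices (x*, ψ* : Fin n → Fin n → Bool, with x* symmetric and irreflexive) minimizes Σ_i |deg_i(x) − k i| over all pairs (x, ψ) satisfying, for all i ≠ j (reading true as 1, false as 0): (ψ i j) + (ψ j i) − 1 ≤ x i j, x i j ≤ ψ i j, x i j ≤ ψ j i, and x i j = x j i, where deg_i(x) is the number of j ≠ i with x i j = true. Define the cost matrix C* by C* i j = −1 if ψ* i j = true and C* i j = 1 otherwise. Then x* is pairwise stable with respect to C*, and for every cost matrix C and every graph x on n nodes that is pairwise stable with respect to C, Σ_i |deg_i(x) − k i| ≥ Σ_i |deg_i(x*) − k i|. -/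
/-- The stability constraints of the integer program, for a pair `(x, ψ)`. -/
def Feasible {n : ℕ} (x ψ : Fin n → Fin n → Bool) : Prop :=
  ∀ i j : Fin n, i ≠ j →
    ((ψ i j).toNat : ℤ) + ((ψ j i).toNat : ℤ) - 1 ≤ ((x i j).toNat : ℤ) ∧
    ((x i j).toNat : ℤ) ≤ ((ψ i j).toNat : ℤ) ∧
    ((x i j).toNat : ℤ) ≤ ((ψ j i).toNat : ℤ) ∧
    x i j = x j i

theorem optimal_cost_matrix (n : ℕ) (k : Fin n → ℕ)
    (xstar ψstar : Fin n → Fin n → Bool)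
    (hgraph : IsGraph xstar)
    (hfeas : Feasible xstar ψstar)
    (hmin : ∀ x ψ : Fin n → Fin n → Bool, Feasible x ψ →
      ∑ i, |(deg x i : ℤ) - (k i : ℤ)| ≥ ∑ i, |(deg xstar i : ℤ) - (k i : ℤ)|)
    (Cstar : Fin n → Fin n → ℝ)
    (hC : ∀ i j, Cstar i j = if ψstar i j = true then -1 else 1) :
    PairwiseStable Cstar xstar ∧
      ∀ (C : Fin n → Fin n → ℝ) (x : Fin n → Fin n → Bool),
        IsGraph x → PairwiseStable C x →
        ∑ i, |(deg x i : ℤ) - (k i : ℤ)| ≥ ∑ i, |(deg xstar i : ℤ) - (k i : ℤ)| := by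
  constructor
  · constructor
    · intro i j hij hx
      obtain ⟨h1, h2, h3, h4⟩ := hfeas i j hij
      rw [hx] at h2 h3
      have hψ : ψstar i j = true := by cases hψ : ψstar i j <;> simp [hψ] at h2 ⊢
      have hψ' : ψstar j i = true := by cases hψ' : ψstar j i <;> simp [hψ'] at h3 ⊢
      rw [hC i j, hC j i, hψ, hψ']
      norm_num
    · intro i j hij hx
      obtain ⟨h1, h2, h3, h4⟩ := hfeas i j hij
      rw [hx] at h1
      by_cases hψ : ψstar i j = true
      · right
        have hψ' : ψstar j i = false := by
          cases hψ' : ψstar j i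
          · rfl
          · rw [hψ, hψ'] at h1; simp at h1
        rw [hC j i, hψ']; norm_num
      · left
        rw [hC i j, if_neg hψ]; norm_num
  · intro C x hgx hps
    set ψ : Fin n → Fin n → Bool := fun i j => decide (C i j < 0) with hψdef
    apply hmin x ψ
    intro i j hij
    refine ⟨?_, ?_, ?_, (hgx.1 i j)⟩
    · cases hx : x i j
      · rcases hps.2 i j hij hx with h | h
        · have : ψ i j = false := by simp [hψdef, not_lt.mpr h]
          rw [this]
          cases hψ' : ψ j i <;> simp
        · have : ψ j i = false := by simp [hψdef, not_lt.mpr h]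
          rw [this]
          cases hψ' : ψ i j <;> simp
      · obtain ⟨h1, h2⟩ := hps.1 i j hij hx
        simp [hψdef, h1, h2]
    · cases hx : x i j
      · simp
      · obtain ⟨h1, h2⟩ := hps.1 i j hij hx
        simp [hψdef, h1]
    · cases hx : x i j
      · simp
      · obtain ⟨h1, h2⟩ := hps.1 i j hij hx
        simp [hψdef, h2]
end
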